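/- Let D ∈ ℕ and let α, Λ_1 ≤ Λ_2 ≤ ⋯ ≤ Λ_α be positive integers, and (V_t)_{t≥1} a monotone decreasing sequence of positive integers with Λ_1 ≤ V_1. Set t_0 := max{1 ≤ t ≤ α : Λ_t ≤ V_1} and s_0 := max(⌈(Λ_1 + ⋯ + Λ_{t_0} − D)/V_1⌉, 0), and suppose V_t = V_1 for all 1 ≤ t ≤ s_0. Define S(s) := s − max{0 ≤ t ≤ α : Λ_1 + ⋯ + Λ_t ≤ V_1 + ⋯ + V_s + D} for s ∈ ℕ. Then S attains its minimum over ℕ at s_0, and S(s_0) = s_0 − t_0 if s_0 > 0, while S(0) = −max{0 ≤ t ≤ α : Λ_1 + ⋯ + Λ_t ≤ D} if s_0 = 0. -/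

import Mathlib

open Finset

private lemma aux_icc_one (x : ℕ) : Finset.Icc 1 x = Finset.Ioc 0 x := by
  ext k; simp [Finset.mem_Icc, Finset.mem_Ioc]; omega

private lemma aux_split (f : ℕ → ℕ) (a b : ℕ) (h : a ≤ b) :
    ∑ k ∈ Finset.Icc 1 b, f k = ∑ k ∈ Finset.Icc 1 a, f k + ∑ k ∈ Finset.Icc (a+1) b, f k := by
  rw [aux_icc_one, aux_icc_one, Finset.Icc_add_one_left_eq_Ioc]
  exact (Finset.sum_Ioc_consecutive f (Nat.zero_le a) h).symm

private lemma aux_sum_le (f : ℕ → ℕ) (c a b : ℕ) (h : ∀ k, a < k → k ≤ b → f k ≤ c) :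
    ∑ k ∈ Finset.Icc (a+1) b, f k ≤ (b - a) * c := by
  rw [Finset.Icc_add_one_left_eq_Ioc]
  calc ∑ k ∈ Finset.Ioc a b, f k ≤ (Finset.Ioc a b).card • c :=
        Finset.sum_le_card_nsmul _ _ _
          (fun k hk => h k (Finset.mem_Ioc.mp hk).1 (Finset.mem_Ioc.mp hk).2)
    _ = (b - a) * c := by rw [Nat.card_Ioc, smul_eq_mul]

private lemma aux_le_sum (f : ℕ → ℕ) (c a b : ℕ) (h : ∀ k, a < k → k ≤ b → c ≤ f k) :
    (b - a) * c ≤ ∑ k ∈ Finset.Icc (a+1) b, f k := by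
  rw [Finset.Icc_add_one_left_eq_Ioc, ← Nat.card_Ioc a b, ← smul_eq_mul]
  exact Finset.card_nsmul_le_sum _ _ _
    (fun k hk => h k (Finset.mem_Ioc.mp hk).1 (Finset.mem_Ioc.mp hk).2)

theorem stmt_16 (D : ℕ) (α : ℕ) (hα : 0 < α)
    (Λ : ℕ → ℕ) (hΛpos : ∀ t, 1 ≤ t → t ≤ α → 0 < Λ t)
    (hΛmono : ∀ s t : ℕ, 1 ≤ s → s ≤ t → t ≤ α → Λ s ≤ Λ t)
    (V : ℕ → ℕ) (hVpos : ∀ t, 1 ≤ t → 0 < V t)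
    (hVmono : ∀ s t : ℕ, 1 ≤ s → s ≤ t → V t ≤ V s)
    (hΛV : Λ 1 ≤ V 1)
    (t₀ : ℕ)
    (ht₀ : t₀ = ((Finset.Icc 1 α).filter (fun t => Λ t ≤ V 1)).max'
        ⟨1, by simp [hΛV]; omega⟩)
    (s₀ : ℕ)
    (hs₀ : s₀ = (⌈(((∑ t ∈ Finset.Icc 1 t₀, Λ t : ℤ) - D : ℤ) / (V 1 : ℤ) : ℚ)⌉).toNat)
    (hV1 : ∀ t, 1 ≤ t → t ≤ s₀ → V t = V 1)
    (S : ℕ → ℤ)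
    (hS : ∀ s, S s = (s : ℤ) -
      (((Finset.range (α + 1)).filter
        (fun t => ∑ k ∈ Finset.Icc 1 t, Λ k ≤ ∑ k ∈ Finset.Icc 1 s, V k + D)).max'
        ⟨0, by simp⟩ : ℤ)) :
    (∀ s : ℕ, S s₀ ≤ S s) ∧
    (0 < s₀ → S s₀ = (s₀ : ℤ) - t₀) ∧
    (s₀ = 0 → S 0 = -(((Finset.range (α + 1)).filter
        (fun t => ∑ k ∈ Finset.Icc 1 t, Λ k ≤ D)).max' ⟨0, by simp⟩ : ℤ)) := by
  set v := V 1 with hv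
  have hvpos : 0 < v := hVpos 1 le_rfl
  set A := ∑ t ∈ Finset.Icc 1 t₀, Λ t with hA
  have hs₀' : s₀ = (⌈(((A:ℤ) - D : ℤ) / (v:ℤ) : ℚ)⌉).toNat := by
    have hc : (∑ t ∈ Finset.Icc 1 t₀, (Λ t : ℤ)) = (A : ℤ) := by rw [hA]; push_cast; rfl
    rw [hs₀, hc]
  set T : ℕ → ℕ := fun s => (((Finset.range (α + 1)).filter
      (fun t => ∑ k ∈ Finset.Icc 1 t, Λ k ≤ ∑ k ∈ Finset.Icc 1 s, V k + D)).max'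
      ⟨0, by simp⟩) with hT
  have hS' : ∀ s, S s = (s : ℤ) - (T s : ℤ) := fun s => hS s
  -- basic facts about T
  have hTmem : ∀ s, T s ∈ (Finset.range (α + 1)).filter
      (fun t => ∑ k ∈ Finset.Icc 1 t, Λ k ≤ ∑ k ∈ Finset.Icc 1 s, V k + D) :=
    fun s => Finset.max'_mem _ _
  have hTle : ∀ s, T s ≤ α := by
    intro s
    have := (Finset.mem_filter.mp (hTmem s)).1
    simp [Finset.mem_range] at this; omega
  have hTsum : ∀ s, ∑ k ∈ Finset.Icc 1 (T s), Λ k ≤ ∑ k ∈ Finset.Icc 1 s, V k + D :=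
    fun s => (Finset.mem_filter.mp (hTmem s)).2
  have hTmax : ∀ s t, t ≤ α → (∑ k ∈ Finset.Icc 1 t, Λ k ≤ ∑ k ∈ Finset.Icc 1 s, V k + D) →
      t ≤ T s := by
    intro s t h1 h2
    have hmem : t ∈ (Finset.range (α + 1)).filter
        (fun t => ∑ k ∈ Finset.Icc 1 t, Λ k ≤ ∑ k ∈ Finset.Icc 1 s, V k + D) :=
      Finset.mem_filter.mpr ⟨Finset.mem_range.mpr (by omega), h2⟩
    exact Finset.le_max' _ t hmem
  -- basic facts about t₀
  have ht₀mem : t₀ ∈ (Finset.Icc 1 α).filter (fun t => Λ t ≤ v) := by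
    rw [ht₀]; exact Finset.max'_mem _ _
  have ht₀1 : 1 ≤ t₀ := by
    have := (Finset.mem_Icc.mp (Finset.mem_filter.mp ht₀mem).1).1; omega
  have ht₀α : t₀ ≤ α := (Finset.mem_Icc.mp (Finset.mem_filter.mp ht₀mem).1).2
  have ht₀Λ : Λ t₀ ≤ v := (Finset.mem_filter.mp ht₀mem).2
  have hgt : ∀ t, t₀ < t → t ≤ α → v < Λ t := by
    intro t h1 h2
    by_contra hc; push_neg at hc
    have : t ≤ t₀ := by
      rw [ht₀]
      have hmem : t ∈ (Finset.Icc 1 α).filter (fun t => Λ t ≤ V 1) :=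
        Finset.mem_filter.mpr ⟨Finset.mem_Icc.mpr ⟨by omega, h2⟩, hc⟩
      exact Finset.le_max' _ t hmem
    omega
  have hΛleV1 : ∀ k, 1 ≤ k → k ≤ t₀ → Λ k ≤ v :=
    fun k h1 h2 => (hΛmono k t₀ h1 h2 ht₀α).trans ht₀Λ
  have hVleV1 : ∀ k, 1 ≤ k → V k ≤ v := fun k h => hVmono 1 k le_rfl h
  -- ceiling facts
  have hAub : A ≤ s₀ * v + D := by
    have h : (s₀:ℤ) ≥ ⌈(((A:ℤ) - D : ℤ) / (v:ℤ) : ℚ)⌉ := by rw [hs₀']; exact Int.self_le_toNat _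
    have h2 : ((((A:ℤ) - D : ℤ) : ℚ) / ((v:ℤ):ℚ)) ≤ (s₀:ℤ) :=
      le_trans (Int.le_ceil _) (by exact_mod_cast h)
    rw [div_le_iff₀ (by exact_mod_cast hvpos : (0:ℚ) < ((v:ℤ):ℚ))] at h2
    have h3 : ((A:ℤ) - D : ℤ) ≤ (s₀:ℤ) * v := by exact_mod_cast h2
    have h4 : (A:ℤ) ≤ (s₀:ℤ) * v + D := by linarith
    exact_mod_cast h4
  have hAlb : 0 < s₀ → s₀ * v + D < A + v := by
    intro hpos
    set q : ℚ := (((A:ℤ) - D : ℤ) / (v:ℤ) : ℚ) with hq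
    have hceil : s₀ = (⌈q⌉).toNat := hs₀'
    have h : ((s₀:ℤ) - 1) < ⌈q⌉ := by omega
    rw [Int.lt_ceil] at h
    rw [hq, lt_div_iff₀ (by exact_mod_cast hvpos : (0:ℚ) < ((v:ℤ):ℚ))] at h
    have h2 : (((s₀:ℤ) - 1) * v : ℤ) < ((A:ℤ) - D : ℤ) := by exact_mod_cast h
    have h3 : (s₀:ℤ) * v + D < (A:ℤ) + v := by nlinarith
    exact_mod_cast h3
  have hA0 : s₀ = 0 → A ≤ D := by
    intro h0
    set q : ℚ := (((A:ℤ) - D : ℤ) / (v:ℤ) : ℚ) with hq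
    have hceil : s₀ = (⌈q⌉).toNat := hs₀'
    have h : ⌈q⌉ ≤ 0 := by omega
    rw [Int.ceil_le] at h
    rw [hq, div_le_iff₀ (by exact_mod_cast hvpos : (0:ℚ) < ((v:ℤ):ℚ))] at h
    push_cast at h
    have h2 : (A:ℚ) ≤ D := by linarith
    exact_mod_cast h2
  -- sums of V
  have hsV : ∀ s, s ≤ s₀ → ∑ k ∈ Finset.Icc 1 s, V k = s * v := by
    intro s hsle
    calc ∑ k ∈ Finset.Icc 1 s, V k = ∑ _k ∈ Finset.Icc 1 s, v := by
          refine Finset.sum_congr rfl (fun k hk => ?_)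
          have hk' := Finset.mem_Icc.mp hk
          exact hV1 k hk'.1 (hk'.2.trans hsle)
      _ = s * v := by simp [Finset.sum_const, Nat.card_Icc]
  have hsVub : ∀ s m, ∑ k ∈ Finset.Icc 1 (s + m), V k ≤ ∑ k ∈ Finset.Icc 1 s, V k + m * v := by
    intro s m
    rw [aux_split V s (s + m) (by omega)]
    have h2 := aux_sum_le V v s (s + m) (fun k h1 _ => hVleV1 k (by omega))
    have h3 : s + m - s = m := by omega
    rw [h3] at h2
    omega
  -- T s₀ ≥ t₀
  have hT0ge : t₀ ≤ T s₀ := by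
    refine hTmax s₀ t₀ ht₀α ?_
    rcases Nat.eq_zero_or_pos s₀ with h0 | hpos
    · subst h0
      have hIcc : Finset.Icc 1 0 = (∅ : Finset ℕ) := by simp
      rw [hIcc]
      simpa using hA0 rfl
    · rw [hsV s₀ le_rfl, ← hA]; omega
  -- T (s₀ + m) ≤ T s₀ + m
  have hGen : ∀ m, T (s₀ + m) ≤ T s₀ + m := by
    intro m
    by_contra hc; push_neg at hc
    have htle : T (s₀ + m) ≤ α := hTle (s₀ + m)
    have h1 : T s₀ + 1 ≤ α := by omega
    have h2 : ¬ (∑ k ∈ Finset.Icc 1 (T s₀ + 1), Λ k ≤ ∑ k ∈ Finset.Icc 1 s₀, V k + D) := by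
      intro hc2
      have := hTmax s₀ (T s₀ + 1) h1 hc2
      omega
    push_neg at h2
    have hsplit : ∑ k ∈ Finset.Icc 1 (T (s₀ + m)), Λ k =
        ∑ k ∈ Finset.Icc 1 (T s₀ + 1), Λ k + ∑ k ∈ Finset.Icc (T s₀ + 1 + 1) (T (s₀ + m)), Λ k :=
      aux_split Λ (T s₀ + 1) (T (s₀ + m)) (by omega)
    have hlow : (T (s₀ + m) - (T s₀ + 1)) * (v + 1) ≤
        ∑ k ∈ Finset.Icc (T s₀ + 1 + 1) (T (s₀ + m)), Λ k := by
      refine aux_le_sum Λ (v + 1) (T s₀ + 1) (T (s₀ + m)) (fun k hk1 hk2 => ?_)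
      have : v < Λ k := hgt k (by omega) (by omega)
      omega
    have hmle : m ≤ T (s₀ + m) - (T s₀ + 1) := by omega
    have hmul : m * (v + 1) ≤ (T (s₀ + m) - (T s₀ + 1)) * (v + 1) :=
      Nat.mul_le_mul_right _ hmle
    have hmv : m * (v + 1) = m * v + m := by ring
    have hub := hsVub s₀ m
    have hts := hTsum (s₀ + m)
    omega
  -- T s₀ = t₀ when s₀ > 0
  have hT0eq : 0 < s₀ → T s₀ = t₀ := by
    intro hpos
    refine le_antisymm ?_ hT0ge
    by_contra hc; push_neg at hc
    have hTα := hTle s₀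
    have hs1 : ∑ k ∈ Finset.Icc 1 (T s₀), Λ k =
        A + ∑ k ∈ Finset.Icc (t₀ + 1) (T s₀), Λ k := aux_split Λ t₀ (T s₀) (by omega)
    have hs2 : (T s₀ - t₀) * (v + 1) ≤ ∑ k ∈ Finset.Icc (t₀ + 1) (T s₀), Λ k := by
      refine aux_le_sum Λ (v + 1) t₀ (T s₀) (fun k hk1 hk2 => ?_)
      have : v < Λ k := hgt k hk1 (by omega)
      omega
    have hmul : v + 1 ≤ (T s₀ - t₀) * (v + 1) := Nat.le_mul_of_pos_left _ (by omega)
    have hts := hTsum s₀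
    rw [hsV s₀ le_rfl] at hts
    have := hAlb hpos
    omega
  -- the bound for s < s₀
  have hless : ∀ s, s < s₀ → T s + s₀ ≤ t₀ + s := by
    intro s hslt
    by_contra hc; push_neg at hc
    have hpos : 0 < s₀ := by omega
    have hAlb' := hAlb hpos
    have hts := hTsum s
    rw [hsV s (by omega)] at hts
    rcases le_or_gt t₀ (T s) with hcase | hcase
    · have hs1 : ∑ k ∈ Finset.Icc 1 (T s), Λ k =
          A + ∑ k ∈ Finset.Icc (t₀ + 1) (T s), Λ k := aux_split Λ t₀ (T s) hcase
      have hmul : s * v + v ≤ s₀ * v := by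
        calc s * v + v = (s + 1) * v := by ring
          _ ≤ s₀ * v := Nat.mul_le_mul_right _ (by omega)
      omega
    · have hs1 : A = ∑ k ∈ Finset.Icc 1 (T s), Λ k +
          ∑ k ∈ Finset.Icc (T s + 1) t₀, Λ k := aux_split Λ (T s) t₀ (by omega)
      have hs2 : ∑ k ∈ Finset.Icc (T s + 1) t₀, Λ k ≤ (t₀ - T s) * v :=
        aux_sum_le Λ v (T s) t₀ (fun k h1 h2 => hΛleV1 k (by omega) h2)
      have hmul : (t₀ - T s) * v ≤ (s₀ - s - 1) * v := Nat.mul_le_mul_right _ (by omega)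
      have e : s * v + (s₀ - s - 1) * v + v = s₀ * v := by
        have h' : s + (s₀ - s - 1) + 1 = s₀ := by omega
        calc s * v + (s₀ - s - 1) * v + v = (s + (s₀ - s - 1) + 1) * v := by ring
          _ = s₀ * v := by rw [h']
      omega
  refine ⟨?_, ?_, ?_⟩
  · intro s
    rcases le_or_gt s₀ s with hcase | hcase
    · obtain ⟨m, rfl⟩ := Nat.exists_eq_add_of_le hcase
      have := hGen m
      rw [hS' s₀, hS' (s₀ + m)]
      push_cast
      omega
    · have h1 := hless s hcase
      have h2 := hT0eq (by omega)
      rw [hS' s₀, hS' s]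
      omega
  · intro hpos
    rw [hS' s₀, hT0eq hpos]
  · intro h0
    rw [hS 0]
    have hIcc : Finset.Icc 1 0 = (∅ : Finset ℕ) := by simp
    simp [hIcc]
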